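/- Let Ω ⊆ ℝ³ be open and u : Ω → ℝ³ twice continuously differentiable, and let τ(x) = vect⁻¹(u(x)) be the skew matrix field with axial vector u. Then curl(Ξ⁻¹(curl τ)) = 0 on Ω; that is, the extended operator J = curl ∘ Ξ⁻¹ ∘ curl vanishes on skew-symmetric matrix fields. -/

import Mathlib

open Matrix

/-- `Ξ⁻¹ μ = μᵀ − (1/2)tr(μ)·I` on 3×3 real matrices. -/
noncomputable def XiInv (μ : Matrix (Fin 3) (Fin 3) ℝ) : Matrix (Fin 3) (Fin 3) ℝ :=
  μᵀ - ((1 / 2 : ℝ) * Matrix.trace μ) • (1 : Matrix (Fin 3) (Fin 3) ℝ)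

/-- `vectInv v` is the unique skew-symmetric 3×3 matrix with `vectInv v *ᵥ w = v ×₃ w`. -/
noncomputable def vectInv (v : Fin 3 → ℝ) : Matrix (Fin 3) (Fin 3) ℝ :=
  !![0, -v 2, v 1; v 2, 0, -v 0; -v 1, v 0, 0]

/-- The partial derivative `∂ⱼ f` of a scalar field on `ℝ³`. -/
noncomputable def pd (j : Fin 3) (f : (Fin 3 → ℝ) → ℝ) (x : Fin 3 → ℝ) : ℝ :=
  fderiv ℝ f x (Pi.single j 1)

/-- The curl of a vector field `u : ℝ³ → ℝ³`. -/
noncomputable def curlVec (u : (Fin 3 → ℝ) → (Fin 3 → ℝ)) (x : Fin 3 → ℝ) : Fin 3 → ℝ :=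
  ![pd 1 (fun y => u y 2) x - pd 2 (fun y => u y 1) x,
    pd 2 (fun y => u y 0) x - pd 0 (fun y => u y 2) x,
    pd 0 (fun y => u y 1) x - pd 1 (fun y => u y 0) x]

/-- The row-wise curl of a matrix field. -/
noncomputable def curlMat (τ : (Fin 3 → ℝ) → Matrix (Fin 3) (Fin 3) ℝ)
    (x : Fin 3 → ℝ) : Matrix (Fin 3) (Fin 3) ℝ :=
  Matrix.of fun i j => curlVec (fun y => τ y i) x j


lemma pd_neg (j : Fin 3) (f : (Fin 3 → ℝ) → ℝ) (x : Fin 3 → ℝ) :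
    pd j (fun y => -(f y)) x = -(pd j f x) := by
  unfold pd; rw [fderiv_fun_neg]; simp

lemma pd_zero (j : Fin 3) (x : Fin 3 → ℝ) : pd j (fun _ => (0:ℝ)) x = 0 := by
  unfold pd; simp

lemma pd_pd_symm {f : (Fin 3 → ℝ) → ℝ} {x : Fin 3 → ℝ} (hf : ContDiffAt ℝ 2 f x)
    (a b : Fin 3) : pd a (pd b f) x = pd b (pd a f) x := by
  have hd : DifferentiableAt ℝ (fderiv ℝ f) x :=
    (hf.fderiv_right (m := 1) (by norm_num)).differentiableAt one_ne_zero
  have key : ∀ j k : Fin 3, pd j (pd k f) x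
      = fderiv ℝ (fderiv ℝ f) x (Pi.single j 1) (Pi.single k 1) := by
    intro j k
    show fderiv ℝ (fun y => fderiv ℝ f y (Pi.single k 1)) x (Pi.single j 1) = _
    rw [fderiv_clm_apply hd (differentiableAt_const _)]
    simp
  rw [key, key, (hf.isSymmSndFDerivAt (by norm_num)).eq]

lemma inner_eq (u : (Fin 3 → ℝ) → (Fin 3 → ℝ)) (y : Fin 3 → ℝ) :
    XiInv (curlMat (fun z => vectInv (u z)) y)
      = Matrix.of fun i j => -(pd j (fun z => u z i) y) := by
  ext i j
  fin_cases i <;> fin_cases j <;>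
    simp [XiInv, curlMat, curlVec, vectInv, Matrix.trace, Fin.sum_univ_three,
      pd_neg, pd_zero, Matrix.one_apply] <;> ring

/-- If `u : Ω → ℝ³` is `C²` on an open set `Ω ⊆ ℝ³` and `τ = vect⁻¹(u)` is the skew
matrix field with axial vector `u`, then `curl(Ξ⁻¹(curl τ)) = 0` on `Ω`: the extended
operator `J = curl ∘ Ξ⁻¹ ∘ curl` vanishes on skew-symmetric matrix fields. -/
theorem J_vanishes_on_skew (Ω : Set (Fin 3 → ℝ)) (hΩ : IsOpen Ω)
    (u : (Fin 3 → ℝ) → (Fin 3 → ℝ)) (hu : ContDiffOn ℝ 2 u Ω) :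
    ∀ x ∈ Ω,
      curlMat (fun y => XiInv (curlMat (fun z => vectInv (u z)) y)) x = 0 := by
  intro x hx
  have hc : ∀ i : Fin 3, ContDiffAt ℝ 2 (fun z => u z i) x :=
    fun i => contDiffAt_pi.mp (hu.contDiffAt (hΩ.mem_nhds hx)) i
  have h1 : (fun y => XiInv (curlMat (fun z => vectInv (u z)) y))
      = fun y => Matrix.of fun i j => -(pd j (fun z => u z i) y) :=
    funext fun y => inner_eq u y
  rw [h1]
  ext i j
  fin_cases j <;>
    simp [curlMat, curlVec, pd_neg] <;>
    rw [pd_pd_symm (hc _)] <;> ring
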